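/- Let ν ∈ (0,1], ρ ≥ 0, let S ⊆ ℝⁿ be a nonempty convex set, and let h : ℝⁿ → ℝ. Suppose that for every x ∈ S there exists a vector ζ ∈ ℝⁿ such that h(y) ≥ h(x) + ⟨ζ, y−x⟩ − ρ‖y−x‖^{ν+1} for all y ∈ S. Then h is ν-paraconvex on S with constant 2ρ, i.e., h(λx+(1−λ)y) ≤ λh(x) + (1−λ)h(y) + 2ρ·min{λ,1−λ}·‖x−y‖^{ν+1} for all x, y ∈ S and λ ∈ [0,1]. -/
import Mathlib


open scoped RealInnerProductSpace

lemma rpow_le_self_aux {a ν : ℝ} (ha0 : 0 ≤ a) (ha1 : a ≤ 1) (hν : 0 < ν) :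
    a ^ (ν + 1) ≤ a := by
  rcases eq_or_lt_of_le ha0 with h0 | h0
  · rw [← h0, Real.zero_rpow (by linarith)]
  · calc a ^ (ν + 1) ≤ a ^ (1 : ℝ) :=
          Real.rpow_le_rpow_of_exponent_ge h0 ha1 (by linarith)
      _ = a := Real.rpow_one a

/-- If at every `x ∈ S` there is `ζ` with
`h y ≥ h x + ⟪ζ, y - x⟫ - ρ‖y - x‖^(ν+1)` for all `y ∈ S`, then `h` is `ν`-paraconvex
on `S` with constant `2ρ`. -/
theorem paraconvex_of_subgradient_ineq {n : ℕ} (ν ρ : ℝ)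
    (hν : ν ∈ Set.Ioc (0 : ℝ) 1) (hρ : 0 ≤ ρ)
    (S : Set (EuclideanSpace ℝ (Fin n))) (hSne : S.Nonempty) (hScv : Convex ℝ S)
    (h : EuclideanSpace ℝ (Fin n) → ℝ)
    (hsub : ∀ x ∈ S, ∃ ζ : EuclideanSpace ℝ (Fin n),
        ∀ y ∈ S, h x + ⟪ζ, y - x⟫ - ρ * ‖y - x‖ ^ (ν + 1) ≤ h y) :
    ∀ x ∈ S, ∀ y ∈ S, ∀ t ∈ Set.Icc (0 : ℝ) 1,
      h (t • x + (1 - t) • y) ≤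
        t * h x + (1 - t) * h y + 2 * ρ * min t (1 - t) * ‖x - y‖ ^ (ν + 1) := by
  obtain ⟨hν0, hν1⟩ := hν
  intro x hx y hy t ht
  obtain ⟨ht0, ht1⟩ := ht
  set z := t • x + (1 - t) • y with hzdef
  have hz : z ∈ S := hScv hx hy ht0 (by linarith) (by ring)
  obtain ⟨ζ, hζ⟩ := hsub z hz
  have hxz : x - z = (1 - t) • (x - y) := by rw [hzdef]; module
  have hyz : y - z = (-t) • (x - y) := by rw [hzdef]; module
  have hnxz : ‖x - z‖ = (1 - t) * ‖x - y‖ := by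
    rw [hxz, norm_smul, Real.norm_eq_abs, abs_of_nonneg (by linarith)]
  have hnyz : ‖y - z‖ = t * ‖x - y‖ := by
    rw [hyz, norm_smul, Real.norm_eq_abs, abs_neg, abs_of_nonneg ht0]
  have hN : (0 : ℝ) ≤ ‖x - y‖ ^ (ν + 1) := Real.rpow_nonneg (norm_nonneg _) _
  have hrx : ‖x - z‖ ^ (ν + 1) = (1 - t) ^ (ν + 1) * ‖x - y‖ ^ (ν + 1) := by
    rw [hnxz, Real.mul_rpow (by linarith) (norm_nonneg _)]
  have hry : ‖y - z‖ ^ (ν + 1) = t ^ (ν + 1) * ‖x - y‖ ^ (ν + 1) := by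
    rw [hnyz, Real.mul_rpow ht0 (norm_nonneg _)]
  have hinner : t * ⟪ζ, x - z⟫ + (1 - t) * ⟪ζ, y - z⟫ = 0 := by
    rw [← real_inner_smul_right, ← real_inner_smul_right, ← inner_add_right]
    have : t • (x - z) + (1 - t) • (y - z) = 0 := by rw [hzdef]; module
    rw [this, inner_zero_right]
  have hx' := hζ x hx
  have hy' := hζ y hy
  rw [hrx] at hx'
  rw [hry] at hy'
  -- key bounds
  have hb1 : t * (1 - t) ^ (ν + 1) ≤ min t (1 - t) := by
    refine le_min ?_ ?_
    · nlinarith [Real.rpow_le_one (by linarith : (0:ℝ) ≤ 1 - t) (by linarith) (by linarith : (0:ℝ) ≤ ν + 1)]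
    · nlinarith [rpow_le_self_aux (by linarith : (0:ℝ) ≤ 1 - t) (by linarith) hν0]
  have hb2 : (1 - t) * t ^ (ν + 1) ≤ min t (1 - t) := by
    refine le_min ?_ ?_
    · nlinarith [rpow_le_self_aux ht0 ht1 hν0]
    · nlinarith [Real.rpow_le_one ht0 ht1 (by linarith : (0:ℝ) ≤ ν + 1)]
  nlinarith [mul_le_mul_of_nonneg_left hx' ht0,
    mul_le_mul_of_nonneg_left hy' (by linarith : (0:ℝ) ≤ 1 - t),
    mul_le_mul_of_nonneg_right (add_le_add hb1 hb2) (mul_nonneg hρ hN)]
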